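/- Fix K ≥ 1, constants L, L', ρ, c₁, c₂ > 0, and learning rates β₁(t), β₂(t) with c₂/√K ≤ β₁(t), β₂(t) ≤ min{c₁/K, 1/L, 1/L'} for all 0 ≤ t ≤ K−1 (where c₂/√K ≤ min{c₁/K, 1/L, 1/L'}, c₂/√K < 1, c₁/K < 1). Let H : ℝᵐ × ℝᵏ → ℝ be nonnegative and differentiable, such that for each fixed ν the map ψ ↦ H(ψ, ν) is L-Lipschitz smooth, for each fixed ψ the map ν ↦ H(ψ, ν) is L-Lipschitz smooth with ‖∇_ν H(ψ, ν)‖ ≤ ρ everywhere. Let F : ℝᵐ → ℝ be differentiable, define Ψ_t(ν) = ψ^t − β₁(t)·∇_ψ H(ψ^t, ν), and let the sequences evolve by ψ^{t+1} = Ψ_t(ν^t) and ν^{t+1} = ν^t − β₂(t)·∇(F ∘ Ψ_t)(ν^t), where additionally ‖∇(F ∘ Ψ_t)(ν^t)‖ ≤ ρ for all t. Then min over 0 ≤ t ≤ K−1 of ‖∇_ψ H(ψ^t, ν^t)‖² ≤ 2·H(ψ⁰, ν⁰)/(c₂·√K) + c₁·ρ²·(2 + L)/(c₂·√K); in particular the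 inner loss gradients converge at rate O(1/√K). (Proposition 3, convergence of the inner loss L_WSL.) -/

import Mathlib

open scoped RealInnerProductSpace

lemma grad_inner_hasDerivAt {E : Type*} [NormedAddCommGroup E] [InnerProductSpace ℝ E] [CompleteSpace E]
    (f : E → ℝ) (hf : Differentiable ℝ f) (x v : E) (s : ℝ) :
    HasDerivAt (fun s : ℝ => f (x + s • v)) ⟪gradient f (x + s • v), v⟫ s := by
  have h1 : HasDerivAt (fun s : ℝ => x + s • v) v s := by
    simpa using ((hasDerivAt_id s).smul_const v).const_add x
  have h2 := (hf (x + s • v)).hasGradientAt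
  have h3 : HasFDerivAt f (InnerProductSpace.toDual ℝ E (gradient f (x + s • v))) (x + s • v) :=
    hasGradientAt_iff_hasFDerivAt.mp h2
  exact (h3.comp_hasDerivAt s h1).congr_deriv (by simp)

lemma descent_lemma {E : Type*} [NormedAddCommGroup E] [InnerProductSpace ℝ E] [CompleteSpace E]
    (f : E → ℝ) (hf : Differentiable ℝ f) (L : ℝ) (hL : 0 ≤ L)
    (hlip : ∀ a b, ‖gradient f a - gradient f b‖ ≤ L * ‖a - b‖)
    (x y : E) :
    f y ≤ f x + ⟪gradient f x, y - x⟫ + L / 2 * ‖y - x‖ ^ 2 := by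
  set v := y - x with hv
  set g : ℝ → ℝ := fun s =>
    f x + s * ⟪gradient f x, v⟫ + L / 2 * s ^ 2 * ‖v‖ ^ 2 - f (x + s • v) with hg
  have hgdiff : ∀ s : ℝ, HasDerivAt g
      (⟪gradient f x, v⟫ + L * s * ‖v‖ ^ 2 - ⟪gradient f (x + s • v), v⟫) s := by
    intro s
    have h1 : HasDerivAt (fun s : ℝ =>
        f x + s * ⟪gradient f x, v⟫ + L / 2 * s ^ 2 * ‖v‖ ^ 2)
        (⟪gradient f x, v⟫ + L * s * ‖v‖ ^ 2) s := by
      have ha : HasDerivAt (fun s : ℝ => s * ⟪gradient f x, v⟫)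
          ⟪gradient f x, v⟫ s := by simpa using (hasDerivAt_id s).mul_const _
      have hb : HasDerivAt (fun s : ℝ => L / 2 * s ^ 2 * ‖v‖ ^ 2)
          (L * s * ‖v‖ ^ 2) s := by
        have : HasDerivAt (fun s : ℝ => s ^ 2) (2 * s) s := by
          simpa using hasDerivAt_pow 2 s
        have := (this.const_mul (L / 2)).mul_const (‖v‖ ^ 2)
        exact this.congr_deriv (by ring)
      exact ((ha.const_add (f x)).add hb)
    exact h1.sub (grad_inner_hasDerivAt f hf x v s)
  have hderiv_nonneg : ∀ s ∈ Set.Ioo (0:ℝ) 1, 0 ≤ deriv g s := by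
    intro s hs
    rw [(hgdiff s).deriv]
    have h1 : ⟪gradient f (x + s • v), v⟫ - ⟪gradient f x, v⟫ ≤ L * s * ‖v‖ ^ 2 := by
      have h2 : ⟪gradient f (x + s • v) - gradient f x, v⟫ ≤
          ‖gradient f (x + s • v) - gradient f x‖ * ‖v‖ :=
        real_inner_le_norm _ _
      have h3 : ‖gradient f (x + s • v) - gradient f x‖ ≤ L * (s * ‖v‖) := by
        have := hlip (x + s • v) x
        simpa [norm_smul, abs_of_nonneg hs.1.le] using this
      have h4 : ‖gradient f (x + s • v) - gradient f x‖ * ‖v‖ ≤ L * (s * ‖v‖) * ‖v‖ :=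
        mul_le_mul_of_nonneg_right h3 (norm_nonneg v)
      calc ⟪gradient f (x + s • v), v⟫ - ⟪gradient f x, v⟫
          = ⟪gradient f (x + s • v) - gradient f x, v⟫ := by
            rw [inner_sub_left]
        _ ≤ L * (s * ‖v‖) * ‖v‖ := h2.trans h4
        _ = L * s * ‖v‖ ^ 2 := by ring
    linarith
  have hmono : MonotoneOn g (Set.Icc (0:ℝ) 1) := by
    apply monotoneOn_of_deriv_nonneg (convex_Icc 0 1)
    · exact fun s _ => ((hgdiff s).differentiableAt).continuousAt.continuousWithinAt
    · intro s hs
      exact ((hgdiff s).differentiableAt).differentiableWithinAt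
    · intro s hs
      rw [interior_Icc] at hs
      exact hderiv_nonneg s hs
  have key := hmono (Set.mem_Icc.mpr ⟨le_refl 0, zero_le_one⟩)
      (Set.mem_Icc.mpr ⟨zero_le_one, le_refl 1⟩) zero_le_one
  have hg0 : g 0 = 0 := by simp [hg]
  have hg1 : g 1 = f x + ⟪gradient f x, v⟫ + L / 2 * ‖v‖ ^ 2 - f y := by
    simp [hg, hv]
  rw [hg0, hg1] at key
  linarith

set_option maxHeartbeats 1000000 in
/-- Proposition 3 (convergence of the inner loss `L_WSL`): under the stated learning-rate
conditions, nonnegativity of the inner loss `H`, `L`-Lipschitz smoothness of `H` in each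
variable separately, the gradient bound `‖∇_ν H‖ ≤ ρ`, and the bound
`‖∇(F ∘ Ψ_t)(ν^t)‖ ≤ ρ` along the iterates, the bi-level iterates satisfy
`min_{0 ≤ t ≤ K−1} ‖∇_ψ H(ψ^t, ν^t)‖² ≤ 2·H(ψ⁰, ν⁰)/(c₂√K) + c₁·ρ²·(2 + L)/(c₂√K)`,
i.e. the inner gradients converge at rate `O(1/√K)`. -/
theorem inner_loss_convergence {m k : ℕ} (K : ℕ) (hK : 1 ≤ K)
    (L L' ρ c₁ c₂ : ℝ)
    (hL : 0 < L) (hL' : 0 < L') (hρ : 0 < ρ) (hc₁ : 0 < c₁) (hc₂ : 0 < c₂)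
    (β₁ β₂ : ℕ → ℝ)
    (hβ₁ : ∀ t < K, c₂ / Real.sqrt K ≤ β₁ t ∧
      β₁ t ≤ min (c₁ / K) (min (1 / L) (1 / L')))
    (hβ₂ : ∀ t < K, c₂ / Real.sqrt K ≤ β₂ t ∧
      β₂ t ≤ min (c₁ / K) (min (1 / L) (1 / L')))
    (hc : c₂ / Real.sqrt K ≤ min (c₁ / K) (min (1 / L) (1 / L')))
    (hc2K : c₂ / Real.sqrt K < 1) (hc1K : c₁ / K < 1)
    (H : EuclideanSpace ℝ (Fin m) × EuclideanSpace ℝ (Fin k) → ℝ)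
    (hH_nonneg : ∀ p, 0 ≤ H p)
    (hH_diff : Differentiable ℝ H)
    (hH_smooth_ψ : ∀ (q : EuclideanSpace ℝ (Fin k))
      (p₁ p₂ : EuclideanSpace ℝ (Fin m)),
      ‖gradient (fun p' => H (p', q)) p₁ - gradient (fun p' => H (p', q)) p₂‖ ≤
        L * ‖p₁ - p₂‖)
    (hH_smooth_ν : ∀ (p : EuclideanSpace ℝ (Fin m))
      (q₁ q₂ : EuclideanSpace ℝ (Fin k)),
      ‖gradient (fun q' => H (p, q')) q₁ - gradient (fun q' => H (p, q')) q₂‖ ≤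
        L * ‖q₁ - q₂‖)
    (hH_grad_ν : ∀ (p : EuclideanSpace ℝ (Fin m)) (q : EuclideanSpace ℝ (Fin k)),
      ‖gradient (fun q' => H (p, q')) q‖ ≤ ρ)
    (F : EuclideanSpace ℝ (Fin m) → ℝ)
    (hF_diff : Differentiable ℝ F)
    (ψ : ℕ → EuclideanSpace ℝ (Fin m)) (ν : ℕ → EuclideanSpace ℝ (Fin k))
    (Ψ : ℕ → EuclideanSpace ℝ (Fin k) → EuclideanSpace ℝ (Fin m))
    (hΨ : ∀ t q, Ψ t q = ψ t - β₁ t • gradient (fun p' => H (p', q)) (ψ t))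
    (hψ_rec : ∀ t, ψ (t + 1) = Ψ t (ν t))
    (hν_rec : ∀ t, ν (t + 1) = ν t - β₂ t • gradient (fun q => F (Ψ t q)) (ν t))
    (hG_grad : ∀ t, ‖gradient (fun q => F (Ψ t q)) (ν t)‖ ≤ ρ) :
    ∃ t < K, ‖gradient (fun p' => H (p', ν t)) (ψ t)‖ ^ 2 ≤
      2 * H (ψ 0, ν 0) / (c₂ * Real.sqrt K) +
        c₁ * ρ ^ 2 * (2 + L) / (c₂ * Real.sqrt K) := by
  have hKpos : (0:ℝ) < K := by exact_mod_cast hK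
  have hsqK_pos : 0 < Real.sqrt K := Real.sqrt_pos.mpr hKpos
  have hsqK : Real.sqrt K * Real.sqrt K = K := Real.mul_self_sqrt hKpos.le
  set g : ℕ → EuclideanSpace ℝ (Fin m) :=
    fun t => gradient (fun p' => H (p', ν t)) (ψ t) with hgdef
  set n : ℕ → EuclideanSpace ℝ (Fin k) :=
    fun t => gradient (fun q => F (Ψ t q)) (ν t) with hndef
  have hψ_step : ∀ t, ψ (t + 1) = ψ t - β₁ t • g t := by
    intro t; rw [hψ_rec t, hΨ t (ν t)]
  have hdiffψ : ∀ q : EuclideanSpace ℝ (Fin k),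
      Differentiable ℝ (fun p' => H (p', q)) := fun q =>
    hH_diff.comp (differentiable_id.prodMk (differentiable_const q))
  have hdiffν : ∀ p : EuclideanSpace ℝ (Fin m),
      Differentiable ℝ (fun q' => H (p, q')) := fun p =>
    hH_diff.comp ((differentiable_const p).prodMk differentiable_id)
  -- per-step inequality
  have hstep : ∀ t < K, H (ψ (t+1), ν (t+1)) ≤
      H (ψ t, ν t) - β₁ t / 2 * ‖g t‖ ^ 2 + β₂ t * ρ ^ 2 + L / 2 * (β₂ t) ^ 2 * ρ ^ 2 := by
    intro t ht
    obtain ⟨hβ₁lo, hβ₁hi⟩ := hβ₁ t ht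
    obtain ⟨hβ₂lo, hβ₂hi⟩ := hβ₂ t ht
    have hβ₁pos : 0 ≤ β₁ t := le_trans (by positivity) hβ₁lo
    have hβ₂pos : 0 ≤ β₂ t := le_trans (by positivity) hβ₂lo
    have hβ₁L : β₁ t * L ≤ 1 := by
      have h1 : β₁ t ≤ 1 / L := le_trans hβ₁hi (le_trans (min_le_right _ _) (min_le_left _ _))
      calc β₁ t * L ≤ (1 / L) * L := mul_le_mul_of_nonneg_right h1 hL.le
        _ = 1 := by field_simp
    -- descent in ψ
    have h1 := descent_lemma (fun p' => H (p', ν t)) (hdiffψ (ν t)) L hL.le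
      (hH_smooth_ψ (ν t)) (ψ t) (ψ (t+1))
    have hdx : ψ (t+1) - ψ t = -(β₁ t • g t) := by rw [hψ_step t]; abel
    rw [hdx] at h1
    have hinner : ⟪g t, -(β₁ t • g t)⟫ = -(β₁ t * ‖g t‖ ^ 2) := by
      rw [inner_neg_right, real_inner_smul_right, real_inner_self_eq_norm_sq]
    have hnorm : ‖-(β₁ t • g t)‖ ^ 2 = (β₁ t) ^ 2 * ‖g t‖ ^ 2 := by
      rw [norm_neg, norm_smul]
      rw [mul_pow, Real.norm_eq_abs, sq_abs]
    rw [hinner, hnorm] at h1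
    have h1' : H (ψ (t+1), ν t) ≤ H (ψ t, ν t) - β₁ t / 2 * ‖g t‖ ^ 2 := by
      have hgg := sq_nonneg ‖g t‖
      nlinarith [mul_nonneg hβ₁pos hgg]
    -- descent in ν
    have h2 := descent_lemma (fun q' => H (ψ (t+1), q')) (hdiffν (ψ (t+1))) L hL.le
      (hH_smooth_ν (ψ (t+1))) (ν t) (ν (t+1))
    have hdν : ν (t+1) - ν t = -(β₂ t • n t) := by rw [hν_rec t]; abel
    rw [hdν] at h2
    have hinner2 : ⟪gradient (fun q' => H (ψ (t+1), q')) (ν t), -(β₂ t • n t)⟫ ≤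
        β₂ t * ρ ^ 2 := by
      calc ⟪gradient (fun q' => H (ψ (t+1), q')) (ν t), -(β₂ t • n t)⟫
          ≤ ‖gradient (fun q' => H (ψ (t+1), q')) (ν t)‖ * ‖-(β₂ t • n t)‖ :=
            real_inner_le_norm _ _
        _ ≤ ρ * (β₂ t * ρ) := by
            apply mul_le_mul (hH_grad_ν _ _) _ (norm_nonneg _) hρ.le
            rw [norm_neg, norm_smul, Real.norm_eq_abs, abs_of_nonneg hβ₂pos]
            exact mul_le_mul_of_nonneg_left (hG_grad t) hβ₂pos
        _ = β₂ t * ρ ^ 2 := by ring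
    have hnorm2 : ‖-(β₂ t • n t)‖ ^ 2 ≤ (β₂ t) ^ 2 * ρ ^ 2 := by
      rw [norm_neg, norm_smul, Real.norm_eq_abs]
      rw [mul_pow, sq_abs]
      apply mul_le_mul_of_nonneg_left _ (sq_nonneg _)
      exact pow_le_pow_left₀ (norm_nonneg _) (hG_grad t) 2
    have h2' : H (ψ (t+1), ν (t+1)) ≤ H (ψ (t+1), ν t) + β₂ t * ρ ^ 2
        + L / 2 * (β₂ t) ^ 2 * ρ ^ 2 := by
      have h5 := mul_le_mul_of_nonneg_left hnorm2 (by positivity : (0:ℝ) ≤ L / 2)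
      linarith
    linarith
  -- sum and telescope
  have htel : ∑ t ∈ Finset.range K, (H (ψ t, ν t) - H (ψ (t+1), ν (t+1)))
      = H (ψ 0, ν 0) - H (ψ K, ν K) := Finset.sum_range_sub' (fun t => H (ψ t, ν t)) K
  have hsum : ∑ t ∈ Finset.range K,
      (β₁ t / 2 * ‖g t‖ ^ 2 - β₂ t * ρ ^ 2 - L / 2 * (β₂ t) ^ 2 * ρ ^ 2)
      ≤ H (ψ 0, ν 0) := by
    calc ∑ t ∈ Finset.range K,
        (β₁ t / 2 * ‖g t‖ ^ 2 - β₂ t * ρ ^ 2 - L / 2 * (β₂ t) ^ 2 * ρ ^ 2)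
        ≤ ∑ t ∈ Finset.range K, (H (ψ t, ν t) - H (ψ (t+1), ν (t+1))) := by
          apply Finset.sum_le_sum
          intro t ht
          have := hstep t (Finset.mem_range.mp ht)
          linarith
      _ = H (ψ 0, ν 0) - H (ψ K, ν K) := htel
      _ ≤ H (ψ 0, ν 0) := by linarith [hH_nonneg (ψ K, ν K)]
  -- bound the noise sums
  have hnoise : ∀ t < K, β₂ t * ρ ^ 2 + L / 2 * (β₂ t) ^ 2 * ρ ^ 2
      ≤ c₁ / K * ρ ^ 2 + L / 2 * (c₁ / K) ^ 2 * ρ ^ 2 := by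
    intro t ht
    obtain ⟨hβ₂lo, hβ₂hi⟩ := hβ₂ t ht
    have hβ₂pos : 0 ≤ β₂ t := le_trans (by positivity) hβ₂lo
    have h1 : β₂ t ≤ c₁ / K := le_trans hβ₂hi (min_le_left _ _)
    have h2 : (β₂ t) ^ 2 ≤ (c₁ / K) ^ 2 := pow_le_pow_left₀ hβ₂pos h1 2
    have e1 := mul_le_mul_of_nonneg_right h1 (sq_nonneg ρ)
    have e2 := mul_le_mul_of_nonneg_left (mul_le_mul_of_nonneg_right h2 (sq_nonneg ρ))
      (by positivity : (0:ℝ) ≤ L / 2)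
    linarith
  -- min element
  obtain ⟨t₀, ht₀mem, ht₀min⟩ := Finset.exists_min_image (Finset.range K)
    (fun t => ‖g t‖ ^ 2) (Finset.nonempty_range_iff.mpr (by omega))
  have ht₀K : t₀ < K := Finset.mem_range.mp ht₀mem
  refine ⟨t₀, ht₀K, ?_⟩
  set M := ‖g t₀‖ ^ 2 with hM
  have hMnonneg : 0 ≤ M := sq_nonneg _
  -- lower bound on the gradient sum
  have hlb : (K : ℝ) * (c₂ / Real.sqrt K / 2 * M) ≤
      ∑ t ∈ Finset.range K, β₁ t / 2 * ‖g t‖ ^ 2 := by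
    calc (K : ℝ) * (c₂ / Real.sqrt K / 2 * M)
        = ∑ _t ∈ Finset.range K, c₂ / Real.sqrt K / 2 * M := by
          rw [Finset.sum_const, Finset.card_range, nsmul_eq_mul]
      _ ≤ ∑ t ∈ Finset.range K, β₁ t / 2 * ‖g t‖ ^ 2 := by
          apply Finset.sum_le_sum
          intro t ht
          have hm := ht₀min t ht
          obtain ⟨hβ₁lo, _⟩ := hβ₁ t (Finset.mem_range.mp ht)
          have h0 : (0:ℝ) ≤ c₂ / Real.sqrt K / 2 := by positivity
          calc c₂ / Real.sqrt K / 2 * M ≤ c₂ / Real.sqrt K / 2 * ‖g t‖ ^ 2 :=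
                mul_le_mul_of_nonneg_left hm h0
            _ ≤ β₁ t / 2 * ‖g t‖ ^ 2 := by
                apply mul_le_mul_of_nonneg_right _ (sq_nonneg _)
                linarith
  have hub : ∑ t ∈ Finset.range K, β₁ t / 2 * ‖g t‖ ^ 2
      ≤ H (ψ 0, ν 0) + c₁ * ρ ^ 2 + L / 2 * c₁ * ρ ^ 2 := by
    have h1 : ∑ t ∈ Finset.range K, (β₂ t * ρ ^ 2 + L / 2 * (β₂ t) ^ 2 * ρ ^ 2)
        ≤ (K : ℝ) * (c₁ / K * ρ ^ 2 + L / 2 * (c₁ / K) ^ 2 * ρ ^ 2) := by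
      calc ∑ t ∈ Finset.range K, (β₂ t * ρ ^ 2 + L / 2 * (β₂ t) ^ 2 * ρ ^ 2)
          ≤ ∑ _t ∈ Finset.range K, (c₁ / K * ρ ^ 2 + L / 2 * (c₁ / K) ^ 2 * ρ ^ 2) :=
            Finset.sum_le_sum (fun t ht => hnoise t (Finset.mem_range.mp ht))
        _ = (K : ℝ) * (c₁ / K * ρ ^ 2 + L / 2 * (c₁ / K) ^ 2 * ρ ^ 2) := by
            rw [Finset.sum_const, Finset.card_range, nsmul_eq_mul]
    have h2 : (K : ℝ) * (c₁ / K * ρ ^ 2 + L / 2 * (c₁ / K) ^ 2 * ρ ^ 2)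
        ≤ c₁ * ρ ^ 2 + L / 2 * c₁ * ρ ^ 2 := by
      have e : (K : ℝ) * (c₁ / K * ρ ^ 2 + L / 2 * (c₁ / K) ^ 2 * ρ ^ 2)
          = c₁ * ρ ^ 2 + L / 2 * (c₁ * (c₁ / K)) * ρ ^ 2 := by
        field_simp
      have h3 : c₁ * (c₁ / K) ≤ c₁ * 1 := mul_le_mul_of_nonneg_left hc1K.le hc₁.le
      have e2 := mul_le_mul_of_nonneg_right
        (mul_le_mul_of_nonneg_left h3 (by positivity : (0:ℝ) ≤ L / 2)) (sq_nonneg ρ)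
      rw [e]
      linarith
    have h3 : ∑ t ∈ Finset.range K, β₁ t / 2 * ‖g t‖ ^ 2
        = ∑ t ∈ Finset.range K,
          (β₁ t / 2 * ‖g t‖ ^ 2 - β₂ t * ρ ^ 2 - L / 2 * (β₂ t) ^ 2 * ρ ^ 2)
        + ∑ t ∈ Finset.range K, (β₂ t * ρ ^ 2 + L / 2 * (β₂ t) ^ 2 * ρ ^ 2) := by
      rw [← Finset.sum_add_distrib]
      congr 1; funext t; ring
    linarith
  -- final arithmetic
  have hKdiv : (K : ℝ) * (c₂ / Real.sqrt K / 2) = c₂ * Real.sqrt K / 2 := by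
    field_simp
    linear_combination (-1) * hsqK
  have hfinal : c₂ * Real.sqrt K / 2 * M ≤
      H (ψ 0, ν 0) + c₁ * ρ ^ 2 * (2 + L) / 2 := by
    have := le_trans hlb hub
    rw [← mul_assoc, hKdiv] at this
    linarith
  have hpos : (0:ℝ) < c₂ * Real.sqrt K := by positivity
  rw [← add_div, le_div_iff₀ hpos]
  linarith
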